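/- (Subset Lemma) Let (X,d) be a metric space, let P ⊆ X be a nonempty finite set, let k ≥ 1 with k ≤ |P|, let S ⊆ P be a subset with |S| ≥ k, and let C be a valid farthest-first output on S with k centers. Then cost(C,S) ≤ 2·OPT(P,k), where OPT(P,k) denotes the optimal k-center cost for the full set P (not for S). -/

import Mathlib

/-- `setDist s C` is the distance from the point `s` to the set `C`,
i.e. the infimum (for nonempty finite `C`, the minimum) of `dist s c` over `c ∈ C`. -/
noncomputable def setDist {X : Type*} [MetricSpace X] (s : X) (C : Set X) : ℝ :=
  sInf ((fun c => dist s c) '' C)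

/-- `cost C S` is the supremum (for nonempty finite `S`, the maximum) over `s ∈ S`
of the distance from `s` to the center set `C`. -/
noncomputable def cost {X : Type*} [MetricSpace X] (C S : Set X) : ℝ :=
  sSup ((fun s => setDist s C) '' S)

/-- `kOPT P k` is the optimal `k`-center cost on the finite set `P`. -/
noncomputable def kOPT {X : Type*} [MetricSpace X] (P : Finset X) (k : ℕ) : ℝ :=
  sInf { r : ℝ | ∃ C : Finset X, C ⊆ P ∧ C.card = k ∧ cost (C : Set X) (P : Set X) = r }

/-- `IsFF S k C` : `C` is a valid farthest-first output on `S` with `k` centers. -/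
def IsFF {X : Type*} [MetricSpace X] (S : Finset X) (k : ℕ) (C : Finset X) : Prop :=
  ∃ c : Fin k → X, Function.Injective c ∧ (∀ i, c i ∈ S) ∧
    (↑C : Set X) = Set.range c ∧
    ∀ i : Fin k, 0 < (i : ℕ) → ∀ s ∈ S,
      setDist s (c '' {j | j < i}) ≤ setDist (c i) (c '' {j | j < i})

lemma setDist_nonneg' {X : Type*} [MetricSpace X] (s : X) (C : Set X) :
    0 ≤ setDist s C := by
  apply Real.sInf_nonneg
  rintro _ ⟨c, _, rfl⟩; exact dist_nonneg

lemma setDist_le' {X : Type*} [MetricSpace X] (s : X) {C : Set X} (hC : C.Finite)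
    {c : X} (hc : c ∈ C) : setDist s C ≤ dist s c :=
  csInf_le (hC.image _).bddBelow ⟨c, hc, rfl⟩

lemma le_setDist' {X : Type*} [MetricSpace X] (s : X) {C : Set X} (hC : C.Nonempty) {r : ℝ}
    (h : ∀ c ∈ C, r ≤ dist s c) : r ≤ setDist s C :=
  le_csInf (hC.image _) (by rintro _ ⟨c, hc, rfl⟩; exact h c hc)

lemma exists_setDist_eq' {X : Type*} [MetricSpace X] (s : X) {C : Set X} (hC : C.Finite)
    (hne : C.Nonempty) : ∃ c ∈ C, setDist s C = dist s c := by
  obtain ⟨c, hc, h⟩ := (hne.image (fun c => dist s c)).csInf_mem (hC.image _)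
  exact ⟨c, hc, h.symm⟩

lemma le_cost' {X : Type*} [MetricSpace X] {C S : Set X} (hS : S.Finite) {s : X}
    (hs : s ∈ S) : setDist s C ≤ cost C S :=
  le_csSup (hS.image _).bddAbove ⟨s, hs, rfl⟩

lemma exists_cost_eq' {X : Type*} [MetricSpace X] {C S : Set X} (hS : S.Finite)
    (hne : S.Nonempty) : ∃ s ∈ S, cost C S = setDist s C := by
  obtain ⟨s, hs, h⟩ := (hne.image (fun s => setDist s C)).csSup_mem (hS.image _)
  exact ⟨s, hs, h.symm⟩

lemma kOPT_spec' {X : Type*} [MetricSpace X] (P : Finset X) (k : ℕ) (hkP : k ≤ P.card) :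
    ∃ Cs : Finset X, Cs ⊆ P ∧ Cs.card = k ∧ cost (Cs : Set X) (P : Set X) = kOPT P k := by
  set A := {r : ℝ | ∃ C : Finset X, C ⊆ P ∧ C.card = k ∧ cost (C : Set X) (P : Set X) = r}
    with hA
  have hfin : A.Finite := by
    have hsub : A ⊆ (fun C : Finset X => cost (C : Set X) (P : Set X)) '' ↑P.powerset := by
      rintro r ⟨Cc, hCP, _, rfl⟩
      exact ⟨Cc, by simpa using hCP, rfl⟩
    exact (P.powerset.finite_toSet.image _).subset hsub
  have hne : A.Nonempty := by
    obtain ⟨Cc, hCP, hcard⟩ := Finset.exists_subset_card_eq hkP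
    exact ⟨_, Cc, hCP, hcard, rfl⟩
  obtain ⟨Cs, h1, h2, h3⟩ := hne.csInf_mem hfin
  exact ⟨Cs, h1, h2, h3⟩

/-- Subset Lemma: if `S ⊆ P` with `|S| ≥ k` and `C` is a valid farthest-first
output on `S` with `k` centers, then `cost(C,S) ≤ 2·OPT(P,k)`, where `OPT(P,k)`
is the optimal `k`-center cost for the full set `P`. -/
theorem stmt_11 {X : Type*} [MetricSpace X] (P : Finset X) (hP : P.Nonempty)
    (k : ℕ) (hk : 1 ≤ k) (hkP : k ≤ P.card)
    (S : Finset X) (hSP : S ⊆ P) (hkS : k ≤ S.card)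
    (C : Finset X) (hC : IsFF S k C) :
    cost (C : Set X) (S : Set X) ≤ 2 * kOPT P k := by
  obtain ⟨c, hinj, hcS, hCr, hFF⟩ := hC
  have hSne : (S : Set X).Nonempty :=
    Finset.coe_nonempty.mpr (Finset.card_pos.mp (lt_of_lt_of_le hk hkS))
  obtain ⟨Cs, hCsP, hCscard, hCscost⟩ := kOPT_spec' P k hkP
  set r := kOPT P k with hrdef
  have hr0 : 0 ≤ r := by
    obtain ⟨p0, hp0⟩ := hP
    have h1 : setDist p0 (Cs : Set X) ≤ cost (Cs : Set X) (P : Set X) :=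
      le_cost' P.finite_toSet (by exact_mod_cast hp0)
    have := setDist_nonneg' p0 (Cs : Set X)
    rw [hCscost] at h1
    linarith
  obtain ⟨t, htS, htcost⟩ := exists_cost_eq' (C := (C : Set X)) S.finite_toSet hSne
  by_cases hR : cost (C : Set X) (S : Set X) ≤ 0
  · linarith
  push_neg at hR
  set R := cost (C : Set X) (S : Set X) with hRdef
  have hCsne : (Cs : Set X).Nonempty :=
    Finset.coe_nonempty.mpr (Finset.card_pos.mp (by omega))
  have hnear : ∀ p ∈ P, ∃ q ∈ Cs, dist p q ≤ r := by
    intro p hp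
    obtain ⟨q, hq, hqe⟩ := exists_setDist_eq' p Cs.finite_toSet hCsne
    refine ⟨q, hq, ?_⟩
    calc dist p q = setDist p (Cs : Set X) := hqe.symm
      _ ≤ cost (Cs : Set X) (P : Set X) := le_cost' P.finite_toSet (by exact_mod_cast hp)
      _ = r := hCscost
  -- the k+1 points
  set p : Fin (k+1) → X := fun i => if h : (i : ℕ) < k then c ⟨i, h⟩ else t with hp
  have hpP : ∀ i, p i ∈ P := by
    intro i
    by_cases h : (i : ℕ) < k
    · simp only [hp, dif_pos h]; exact hSP (hcS _)
    · simp only [hp, dif_neg h]; exact hSP (Finset.mem_coe.mp htS)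
  have hRle : ∀ x ∈ (C : Set X), R ≤ dist t x := by
    intro x hx
    exact htcost.trans_le (setDist_le' t C.finite_toSet hx)
  have key : ∀ i j : Fin (k+1), (i : ℕ) < (j : ℕ) → R ≤ dist (p i) (p j) := by
    intro i j hij
    have hi : (i : ℕ) < k := by omega
    by_cases hj : (j : ℕ) < k
    · -- both are centers
      set i' : Fin k := ⟨i, hi⟩
      set j' : Fin k := ⟨j, hj⟩
      set pref : Set X := c '' {m | m < j'} with hpref
      have hprefne : pref.Nonempty := ⟨c i', ⟨i', hij, rfl⟩⟩
      have hprefC : pref ⊆ (C : Set X) := by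
        rw [hCr]; rintro _ ⟨m, _, rfl⟩; exact Set.mem_range_self m
      have h1 : R ≤ setDist t pref :=
        le_setDist' t hprefne (fun x hx => hRle x (hprefC hx))
      have h2 : setDist t pref ≤ setDist (c j') pref :=
        hFF j' (by show 0 < (j : ℕ); omega) t (Finset.mem_coe.mp htS)
      have h3 : setDist (c j') pref ≤ dist (c j') (c i') :=
        setDist_le' _ (Set.toFinite _) ⟨i', hij, rfl⟩
      have hpi : p i = c i' := by simp only [hp, dif_pos hi]; rfl
      have hpj : p j = c j' := by simp only [hp, dif_pos hj]; rfl
      rw [hpi, hpj, dist_comm]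
      linarith
    · -- j is the extra point t
      have hpi : p i = c ⟨i, hi⟩ := by simp only [hp, dif_pos hi]
      have hpj : p j = t := by simp only [hp, dif_neg hj]
      rw [hpi, hpj, dist_comm]
      exact hRle _ (by rw [hCr]; exact Set.mem_range_self _)
  have hpP' : ∀ i ∈ (Finset.univ : Finset (Fin (k+1))), p i ∈ P := fun i _ => hpP i
  choose q hq1 hq2 using fun i => hnear (p i) (hpP i)
  have hcardlt : Cs.card < (Finset.univ : Finset (Fin (k+1))).card := by
    simp [hCscard]
  obtain ⟨i, _, j, _, hne, heq⟩ :=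
    Finset.exists_ne_map_eq_of_card_lt_of_maps_to hcardlt (fun i _ => hq1 i)
  have hineq : ∀ i j : Fin (k+1), (i : ℕ) < (j : ℕ) → q i = q j → R ≤ 2 * r := by
    intro i j hij hq
    have h1 := key i j hij
    have h2 : dist (p i) (p j) ≤ dist (p i) (q i) + dist (q j) (p j) := by
      rw [hq]
      calc dist (p i) (p j) ≤ dist (p i) (q j) + dist (q j) (p j) := dist_triangle _ _ _
        _ = dist (p i) (q j) + dist (q j) (p j) := rfl
    have h3 := hq2 i
    have h4 := hq2 j
    rw [dist_comm] at h4
    linarith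
  rcases lt_or_gt_of_ne (fun h : (i : ℕ) = (j : ℕ) => hne (Fin.ext h)) with h | h
  · exact hineq i j h heq
  · exact hineq j i h heq.symm
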